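/- Let n ≥ m and let A_1, …, A_L be real symmetric m×m matrices. The family {A_1,…,A_L} is D_{m,n}-SD if and only if there exist real symmetric n×n matrices S_1, …, S_L such that the family {S_1,…,S_L} is SD and, for every 1 ≤ i ≤ L, the top-left m×m submatrix of S_i equals A_i. -/

import Mathlib

open Matrix

/-- Simultaneously diagonalizable on `SL_n(ℝ)`. -/
def IsSD {ι : Type*} {n : ℕ} (S : ι → Matrix (Fin n) (Fin n) ℝ) : Prop :=
  ∃ P : Matrix (Fin n) (Fin n) ℝ, P.det = 1 ∧ ∀ i, (Pᵀ * S i * P).IsDiag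

noncomputable section SD15Aux

/-- The `n × m` inclusion matrix. -/
def inclM {m n : ℕ} (hmn : m ≤ n) : Matrix (Fin n) (Fin m) ℝ :=
  Matrix.of fun i j => if i = Fin.castLE hmn j then 1 else 0

lemma mul_inclM {m n k : ℕ} (hmn : m ≤ n) (M : Matrix (Fin k) (Fin n) ℝ) :
    M * inclM hmn = M.submatrix id (Fin.castLE hmn) := by
  ext i j
  simp [inclM, Matrix.mul_apply]

lemma inclM_t_mul {m n k : ℕ} (hmn : m ≤ n) (M : Matrix (Fin n) (Fin k) ℝ) :
    (inclM hmn)ᵀ * M = M.submatrix (Fin.castLE hmn) id := by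
  ext i j
  simp [inclM, Matrix.mul_apply, Matrix.transpose_apply]

lemma inclM_sandwich {m n : ℕ} (hmn : m ≤ n) (M : Matrix (Fin n) (Fin n) ℝ) :
    (inclM hmn)ᵀ * M * inclM hmn = M.submatrix (Fin.castLE hmn) (Fin.castLE hmn) := by
  rw [Matrix.mul_assoc, mul_inclM]
  have := inclM_t_mul hmn (M.submatrix id (Fin.castLE hmn))
  rw [this, Matrix.submatrix_submatrix]
  rfl

lemma inclM_mulVec_injective {m n : ℕ} (hmn : m ≤ n) :
    Function.Injective (inclM hmn).mulVec := by
  have h : ∀ x : Fin m → ℝ, ∀ j : Fin m, (inclM hmn).mulVec x (Fin.castLE hmn j) = x j := by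
    intro x j
    simp [inclM, Matrix.mulVec, dotProduct, Fin.castLE_inj]
  intro x y hxy
  funext j
  rw [← h x j, ← h y j, hxy]

end SD15Aux

lemma extend_indep {n : ℕ} : ∀ (d k : ℕ) (hk : k ≤ n), n - k ≤ d →
    ∀ c : Fin k → (Fin n → ℝ), LinearIndependent ℝ c →
    ∃ c' : Fin n → (Fin n → ℝ), LinearIndependent ℝ c' ∧
      ∀ j, c' (Fin.castLE hk j) = c j
  | 0, k, hk, hd, c, hc => by
    have hkn : k = n := by omega
    subst hkn
    exact ⟨c, hc, fun j => congrArg c (Fin.ext rfl)⟩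
  | (d+1), k, hk, hd, c, hc => by
    rcases eq_or_lt_of_le hk with rfl | hlt
    · exact ⟨c, hc, fun j => congrArg c (Fin.ext rfl)⟩
    · have hne : Submodule.span ℝ (Set.range c) ≠ ⊤ := by
        intro h
        have h1 := finrank_span_eq_card hc
        rw [h, finrank_top] at h1
        simp [Module.finrank_fintype_fun_eq_card] at h1
        omega
      obtain ⟨v, -, hv⟩ := SetLike.exists_of_lt (lt_top_iff_ne_top.mpr hne :
        Submodule.span ℝ (Set.range c) < ⊤)
      have hsnoc : LinearIndependent ℝ (Fin.snoc c v : Fin (k+1) → (Fin n → ℝ)) :=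
        linearIndependent_fin_snoc.mpr ⟨hc, hv⟩
      obtain ⟨c', hc', hext⟩ := extend_indep d (k+1) hlt (by omega) _ hsnoc
      refine ⟨c', hc', fun j => ?_⟩
      have h1 : Fin.castLE hk j = Fin.castLE hlt (Fin.castSucc j) := rfl
      rw [h1, hext, Fin.snoc_castSucc]

/-- Extend an `n × m` matrix with linearly independent columns to an invertible
`n × n` matrix. -/
lemma exists_extension {m n : ℕ} (hmn : m ≤ n) (hn : 0 < n)
    (P : Matrix (Fin n) (Fin m) ℝ) (h : LinearIndependent ℝ Pᵀ) :
    ∃ E : Matrix (Fin n) (Fin n) ℝ, IsUnit E.det ∧ E * inclM hmn = P := by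
  obtain ⟨c', hc', hext⟩ := extend_indep (n - m) m hmn le_rfl Pᵀ h
  refine ⟨(Matrix.of fun i j => c' j i), ?_, ?_⟩
  · haveI : Nonempty (Fin n) := ⟨⟨0, hn⟩⟩
    have hcard : Fintype.card (Fin n) = Module.finrank ℝ (Fin n → ℝ) := by
      simp [Module.finrank_fintype_fun_eq_card]
    let b := basisOfLinearIndependentOfCardEqFinrank hc' hcard
    have hb : ⇑b = c' := coe_basisOfLinearIndependentOfCardEqFinrank hc' hcard
    have hE : (Matrix.of fun i j => c' j i) = (Pi.basisFun ℝ (Fin n)).toMatrix ⇑b := by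
      ext i j
      simp [Module.Basis.toMatrix_apply, hb]
    rw [hE]
    haveI := Module.Basis.invertibleToMatrix (Pi.basisFun ℝ (Fin n)) b
    exact Matrix.isUnit_det_of_invertible _
  · rw [mul_inclM]
    ext i j
    have := congrFun (hext j) i
    simpa using this
lemma diag_sandwich {n : ℕ} (g : Fin n → ℝ) {M : Matrix (Fin n) (Fin n) ℝ}
    (h : M.IsDiag) : (Matrix.diagonal g * M * Matrix.diagonal g).IsDiag := by
  intro i j hij
  have : (Matrix.diagonal g * M * Matrix.diagonal g) i j = g i * M i j * g j := by
    rw [Matrix.mul_diagonal, Matrix.diagonal_mul]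
  rw [this, h hij, mul_zero, zero_mul]

theorem stmt_15 (m n L : ℕ) (hmn : m ≤ n)
    (A : Fin L → Matrix (Fin m) (Fin m) ℝ) (hA : ∀ i, (A i).IsSymm) :
    (∃ P : Matrix (Fin n) (Fin m) ℝ, (Pᵀ * P).det = 1 ∧
      ∃ D : Fin L → Matrix (Fin n) (Fin n) ℝ,
        (∀ i, (D i).IsDiag) ∧ ∀ i, A i = Pᵀ * D i * P) ↔
    (∃ S : Fin L → Matrix (Fin n) (Fin n) ℝ, (∀ i, (S i).IsSymm) ∧ IsSD S ∧
      ∀ i, (S i).submatrix (Fin.castLE hmn) (Fin.castLE hmn) = A i) := by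
  constructor
  · rcases Nat.eq_zero_or_pos n with hn0 | hn
    · subst hn0
      rintro -
      have hm0 : m = 0 := Nat.le_zero.mp hmn
      refine ⟨fun _ => 0, fun i => by rw [Matrix.IsSymm, Matrix.transpose_zero],
        ⟨1, Matrix.det_one, fun i => ?_⟩, fun i => ?_⟩
      · intro a b _
        simp
      · ext a b
        exact absurd a.isLt (by omega)
    ·
      rintro ⟨P, hPdet, D, hDdiag, hAD⟩
      -- columns of P are linearly independent
      have hPinj : Function.Injective P.mulVec := by
        intro x y hxy
        have h1 : (Pᵀ * P).mulVec x = (Pᵀ * P).mulVec y := by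
          rw [← Matrix.mulVec_mulVec, ← Matrix.mulVec_mulVec, hxy]
        exact Matrix.mulVec_injective_iff_isUnit.mpr
          ((Matrix.isUnit_iff_isUnit_det _).mpr (by rw [hPdet]; exact isUnit_one)) h1
      have hli : LinearIndependent ℝ Pᵀ := by
        refine Fintype.linearIndependent_iff.mpr ?_
        intro g hg
        have : P.mulVec g = 0 := by
          funext i
          have := congrFun hg i
          simpa [Matrix.mulVec, dotProduct, Finset.sum_apply, mul_comm] using this
        have h0 : P.mulVec g = P.mulVec 0 := by simpa using this
        intro i; exact congrFun (hPinj h0) i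
      obtain ⟨E, hEdet, hEincl⟩ := exists_extension hmn hn P hli
      have hETdet : IsUnit Eᵀ.det := by rwa [Matrix.det_transpose]
      -- the diagonal correction matrix
      set g : Fin n → ℝ := fun k => if (k : ℕ) = 0 then E.det else 1 with hg
      have hgprod : ∏ k, g k = E.det := by
        rw [Finset.prod_eq_single (⟨0, hn⟩ : Fin n)]
        · simp [hg]
        · intro k _ hk
          simp only [hg]
          rw [if_neg]
          intro h0
          exact hk (Fin.ext h0)
        · simp
      refine ⟨fun i => Eᵀ * D i * E, fun i => ?_, ⟨E⁻¹ * Matrix.diagonal g, ?_, fun i => ?_⟩, fun i => ?_⟩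
      · -- symmetry
        show (Eᵀ * D i * E).IsSymm
        rw [Matrix.IsSymm, Matrix.transpose_mul, Matrix.transpose_mul, Matrix.transpose_transpose,
          (hDdiag i).isSymm, Matrix.mul_assoc]
      · -- determinant one
        rw [Matrix.det_mul, Matrix.det_nonsing_inv, Matrix.det_diagonal, hgprod,
          Ring.inverse_eq_inv]
        exact inv_mul_cancel₀ hEdet.ne_zero
      · -- diagonality
        have key : (E⁻¹ * Matrix.diagonal g)ᵀ * (Eᵀ * D i * E) * (E⁻¹ * Matrix.diagonal g)
            = Matrix.diagonal g * D i * Matrix.diagonal g := by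
          rw [Matrix.transpose_mul, Matrix.diagonal_transpose, Matrix.transpose_nonsing_inv]
          simp only [Matrix.mul_assoc]
          rw [Matrix.mul_nonsing_inv_cancel_left _ _ hEdet,
            Matrix.nonsing_inv_mul_cancel_left _ _ hETdet]
        rw [key]
        exact diag_sandwich g (hDdiag i)
      · -- top-left corner
        rw [← inclM_sandwich hmn, hAD i, ← hEincl, Matrix.transpose_mul]
        simp only [Matrix.mul_assoc]
  ·
    rintro ⟨S, hSsymm, ⟨Q, hQdet, hQdiag⟩, hsub⟩
    have hQu : IsUnit Q.det := by rw [hQdet]; exact isUnit_one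
    have hQTu : IsUnit Qᵀ.det := by rwa [Matrix.det_transpose]
    set P₀ : Matrix (Fin n) (Fin m) ℝ := Q⁻¹ * inclM hmn with hP₀
    have key : ∀ i, A i = P₀ᵀ * (Qᵀ * S i * Q) * P₀ := by
      intro i
      rw [← hsub i, ← inclM_sandwich hmn, hP₀, Matrix.transpose_mul,
        Matrix.transpose_nonsing_inv]
      simp only [Matrix.mul_assoc]
      rw [Matrix.mul_nonsing_inv_cancel_left _ _ hQu,
        Matrix.nonsing_inv_mul_cancel_left _ _ hQTu]
    have hP₀inj : Function.Injective P₀.mulVec := by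
      have hQinvu : IsUnit Q⁻¹.det := by
        rw [Matrix.det_nonsing_inv, hQdet]; simp
      intro x y hxy
      apply inclM_mulVec_injective hmn
      apply Matrix.mulVec_injective_iff_isUnit.mpr ((Matrix.isUnit_iff_isUnit_det _).mpr hQinvu)
      rwa [Matrix.mulVec_mulVec, Matrix.mulVec_mulVec]
    have hPD : (P₀ᵀ * P₀).PosDef := by
      rw [Matrix.posDef_iff_dotProduct_mulVec]
      constructor
      · show (P₀ᵀ * P₀)ᴴ = _
        ext i j
        simp [Matrix.mul_apply, Matrix.conjTranspose_apply, mul_comm]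
      · intro x hx
        have hv : P₀.mulVec x ≠ 0 := by
          intro h0
          exact hx (hP₀inj (by simpa using h0))
        have : star x ⬝ᵥ (P₀ᵀ * P₀) *ᵥ x = (P₀ *ᵥ x) ⬝ᵥ (P₀ *ᵥ x) := by
          rw [star_trivial, ← Matrix.mulVec_mulVec, Matrix.dotProduct_mulVec,
            Matrix.vecMul_transpose]
        rw [this]
        refine lt_of_le_of_ne ?_ (Ne.symm ?_)
        · exact Finset.sum_nonneg fun k _ => mul_self_nonneg _
        · exact fun h => hv (dotProduct_self_eq_zero.mp h)
    have hgpos : 0 < (P₀ᵀ * P₀).det := hPD.det_pos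
    by_cases hm : m = 0
    · subst hm
      exact ⟨P₀, Matrix.det_isEmpty, fun i => Qᵀ * S i * Q, hQdiag, key⟩
    · set g : ℝ := (P₀ᵀ * P₀).det with hgdef
      set t : ℝ := g ^ (-(m : ℝ)⁻¹) with htdef
      have ht : 0 < t := Real.rpow_pos_of_pos hgpos _
      have htm : t ^ m = g⁻¹ := by
        rw [htdef, ← Real.rpow_natCast (g ^ (-(m:ℝ)⁻¹)) m, ← Real.rpow_mul hgpos.le]
        have : -(m : ℝ)⁻¹ * (m : ℕ) = -1 := by
          field_simp
        rw [this, Real.rpow_neg_one]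
      set c : ℝ := Real.sqrt t with hcdef
      have hcc : c * c = t := Real.mul_self_sqrt ht.le
      have hcpos : 0 < c := Real.sqrt_pos.mpr ht
      refine ⟨c • P₀, ?_, fun i => t⁻¹ • (Qᵀ * S i * Q), fun i => (hQdiag i).smul _, fun i => ?_⟩
      · rw [Matrix.transpose_smul, Matrix.smul_mul, Matrix.mul_smul, smul_smul, hcc]
        rw [Matrix.det_smul, Fintype.card_fin, htm, inv_mul_cancel₀ hgpos.ne']
      · have h1 : (c • P₀)ᵀ * (t⁻¹ • (Qᵀ * S i * Q)) * (c • P₀)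
            = (c * t⁻¹ * c) • (P₀ᵀ * (Qᵀ * S i * Q) * P₀) := by
          simp only [Matrix.transpose_smul, Matrix.smul_mul, Matrix.mul_smul, smul_smul]
          congr 1
          ring
        have h2 : c * t⁻¹ * c = 1 := by
          have h3 : c * t⁻¹ * c = c * c * t⁻¹ := by ring
          rw [h3, hcc, mul_inv_cancel₀ ht.ne']
        rw [h1, h2, one_smul]
        exact key i
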